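/- Suppose v₁ = T^α₁₁ u₁ + T^α₁₃ u₃ and v₃ = T^α₃₁ u₁ + T^α₃₃ u₃ on the coarse side, v₂ = T^β₂₂ u₂ + T^β₂₃ (L₁ₜ₂ u₃) on the fine side, the flux-matching condition v₃ = L₂ₜ₁ (T^β₃₂ u₂ + T^β₃₃ L₁ₜ₂ u₃) holds, and T^α₃₃ − L₂ₜ₁ T^β₃₃ L₁ₜ₂ is invertible. Set w := (T^α₃₃ − L₂ₜ₁ T^β₃₃ L₁ₜ₂)⁻¹ (−T^α₃₁ u₁ + L₂ₜ₁ T^β₃₂ u₂). Then v₁ = T^α₁₁ u₁ + T^α₁₃ w and v₂ = T^β₂₂ u₂ + T^β₂₃ L₁ₜ₂ w; equivalently, (v₁, v₂) equals the merged map [[T^α₁₁, 0], [0, T^β₂₂]] + [[T^α₁₃], [T^β₂₃ L₁ₜ₂]] · (T^α₃₃ − L₂ₜ₁ T^β₃₃ L₁ₜ₂)⁻¹ · [−T^α₃₁ | L₂ₜ₁ T^β₃₂] applied to (u₁, u₂). -/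

import Mathlib

/-- Merge of a coarse box with a finer box via interpolation: the exterior
fluxes are given by the merged Dirichlet-to-Neumann map. -/
theorem hps_merge_DtN_interp {n₁ n₂ n₃ m₃ : ℕ}
    (Tα₁₁ : Matrix (Fin n₁) (Fin n₁) ℝ) (Tα₁₃ : Matrix (Fin n₁) (Fin n₃) ℝ)
    (Tα₃₁ : Matrix (Fin n₃) (Fin n₁) ℝ) (Tα₃₃ : Matrix (Fin n₃) (Fin n₃) ℝ)
    (Tβ₂₂ : Matrix (Fin n₂) (Fin n₂) ℝ) (Tβ₂₃ : Matrix (Fin n₂) (Fin m₃) ℝ)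
    (Tβ₃₂ : Matrix (Fin m₃) (Fin n₂) ℝ) (Tβ₃₃ : Matrix (Fin m₃) (Fin m₃) ℝ)
    (L₂ₜ₁ : Matrix (Fin n₃) (Fin m₃) ℝ) (L₁ₜ₂ : Matrix (Fin m₃) (Fin n₃) ℝ)
    (u₁ v₁ : Fin n₁ → ℝ) (u₂ v₂ : Fin n₂ → ℝ) (u₃ v₃ : Fin n₃ → ℝ)
    (hα₁ : v₁ = Tα₁₁.mulVec u₁ + Tα₁₃.mulVec u₃)
    (hα₃ : v₃ = Tα₃₁.mulVec u₁ + Tα₃₃.mulVec u₃)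
    (hβ₂ : v₂ = Tβ₂₂.mulVec u₂ + Tβ₂₃.mulVec (L₁ₜ₂.mulVec u₃))
    (hβ₃ : v₃ = L₂ₜ₁.mulVec (Tβ₃₂.mulVec u₂ + Tβ₃₃.mulVec (L₁ₜ₂.mulVec u₃)))
    (hinv : IsUnit (Tα₃₃ - L₂ₜ₁ * Tβ₃₃ * L₁ₜ₂))
    (w : Fin n₃ → ℝ)
    (hw : w = (Tα₃₃ - L₂ₜ₁ * Tβ₃₃ * L₁ₜ₂)⁻¹.mulVec
      (-(Tα₃₁.mulVec u₁) + (L₂ₜ₁ * Tβ₃₂).mulVec u₂)) :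
    v₁ = Tα₁₁.mulVec u₁ + Tα₁₃.mulVec w ∧
    v₂ = Tβ₂₂.mulVec u₂ + (Tβ₂₃ * L₁ₜ₂).mulVec w ∧
    Sum.elim v₁ v₂ =
      (Matrix.fromBlocks Tα₁₁ 0 0 Tβ₂₂ +
        Matrix.fromRows Tα₁₃ (Tβ₂₃ * L₁ₜ₂) * (Tα₃₃ - L₂ₜ₁ * Tβ₃₃ * L₁ₜ₂)⁻¹ *
          Matrix.fromCols (-Tα₃₁) (L₂ₜ₁ * Tβ₃₂)).mulVec (Sum.elim u₁ u₂) := by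
  set A := Tα₃₃ - L₂ₜ₁ * Tβ₃₃ * L₁ₜ₂ with hA
  have hAu₃ : A.mulVec u₃ = -(Tα₃₁.mulVec u₁) + (L₂ₜ₁ * Tβ₃₂).mulVec u₂ := by
    have h := hα₃.symm.trans hβ₃
    rw [Matrix.mulVec_add] at h
    simp only [hA, Matrix.sub_mulVec, ← Matrix.mulVec_mulVec, Matrix.mul_assoc]
    linear_combination h
  have hwu : w = u₃ := by
    rw [hw, ← hAu₃, Matrix.mulVec_mulVec,
      Matrix.nonsing_inv_mul A ((Matrix.isUnit_iff_isUnit_det A).mp hinv),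
      Matrix.one_mulVec]
  subst hwu
  refine ⟨hα₁, by rw [hβ₂, Matrix.mulVec_mulVec], ?_⟩
  rw [Matrix.add_mulVec, Matrix.fromBlocks_mulVec, Matrix.mul_assoc,
    ← Matrix.mulVec_mulVec, ← Matrix.mulVec_mulVec,
    Matrix.fromCols_mulVec_sumElim, Matrix.neg_mulVec, ← hAu₃, Matrix.mulVec_mulVec, Matrix.mulVec_mulVec,
    Matrix.mul_assoc, Matrix.nonsing_inv_mul A ((Matrix.isUnit_iff_isUnit_det A).mp hinv),
    Matrix.mul_one, Matrix.fromRows_mulVec]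
  funext i
  cases i <;> simp [hα₁, hβ₂, Matrix.mulVec_mulVec]
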